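/- Under the long cluster rule S0, for any state x with l(x) ≥ 1, one step of the deterministic dynamics yields a state x' with l(x') = l(x) − 1. Consequently, after exactly l(x) steps the system reaches a state with l = 0. -/

import Mathlib

open Function

namespace ContourChain

variable {N : ℕ}

/-- Particles `i` and `i+1` compete at node `(i, i+1)` iff `x i = 0` and `x (i+1) = 1`. -/
def Competes (x : ZMod N → Bool) (i : ZMod N) : Prop :=
  x i = false ∧ x (i + 1) = true

/-- `x'` is a possible successor of `x` under some competition resolution rule:
a particle stays only if it is involved in a competition, and in each competition
exactly one of the two particles moves. -/
def IsStep (x x' : ZMod N → Bool) : Prop :=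
  (∀ i, x' i = x i → Competes x i ∨ Competes x (i - 1)) ∧
  (∀ i, Competes x i → (x' i = x i ↔ x' (i + 1) = !(x (i + 1))))

/-- Maximal length (capped at `N`) of a cyclic run of the value `b` in `x`. -/
noncomputable def maxRun (x : ZMod N → Bool) (b : Bool) : ℕ :=
  sSup {s : ℕ | s ≤ N ∧ ∃ i : ZMod N, ∀ k : ℕ, k < s → x (i + (k : ZMod N)) = b}

/-- Maximal length of a 0-cluster. -/
noncomputable def l0 (x : ZMod N → Bool) : ℕ := maxRun x false

/-- Maximal length of a 1-cluster. -/
noncomputable def l1 (x : ZMod N → Bool) : ℕ := maxRun x true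

/-- `l(x) = min (l0 x) (l1 x)`. -/
noncomputable def lmin (x : ZMod N → Bool) : ℕ := min (l0 x) (l1 x)

/-- One step in which every left competitor (the particle moving from cell 0 to cell 1) wins. -/
def leftStep (x : ZMod N → Bool) : ZMod N → Bool :=
  fun i => if x i = true ∧ x (i - 1) = false then true else !(x i)

/-- One step in which every right competitor (the particle moving from cell 1 to cell 0) wins. -/
def rightStep (x : ZMod N → Bool) : ZMod N → Bool :=
  fun i => if x i = false ∧ x (i + 1) = true then false else !(x i)

/-- The long cluster rule `S₀`: left competitors win if `l0 x ≥ l1 x`, otherwise right ones win. -/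
noncomputable def longClusterStep (x : ZMod N → Bool) : ZMod N → Bool :=
  if l1 x ≤ l0 x then leftStep x else rightStep x

/-- Free flight dynamics (no delays): every particle flips its cell. -/
def flipAll (x : ZMod N → Bool) : ZMod N → Bool := fun i => !(x i)

/-- A state of free movement: no competition occurs now or at any future step
(so every particle moves forever and the dynamics is `flipAll`). -/
def IsFree (x : ZMod N → Bool) : Prop :=
  ∀ n : ℕ, ∀ i, ¬ Competes (flipAll^[n] x) i

/-- Number of steps to first reach a free-movement state under rule `S` (`⊤ = ∞` if never). -/
noncomputable def reachTime (S : (ZMod N → Bool) → ZMod N → Bool)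
    (x : ZMod N → Bool) : ℕ∞ :=
  sInf ((↑) '' {n : ℕ | IsFree (S^[n] x)})

end ContourChain

namespace ContourChain

/-- Auxiliary: `x` has a cyclic run of `b`'s of length `s`. -/
def HasRun (x : ZMod N → Bool) (b : Bool) (s : ℕ) : Prop :=
  ∃ i : ZMod N, ∀ k : ℕ, k < s → x (i + (k : ZMod N)) = b

lemma maxRun_eq (x : ZMod N → Bool) (b : Bool) :
    maxRun x b = sSup {s : ℕ | s ≤ N ∧ HasRun x b s} := rfl

lemma hasRun_mono {x : ZMod N → Bool} {b : Bool} {s t : ℕ} (h : HasRun x b s)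
    (hts : t ≤ s) : HasRun x b t := by
  obtain ⟨i, hi⟩ := h
  exact ⟨i, fun k hk => hi k (lt_of_lt_of_le hk hts)⟩

lemma runSet_nonempty (x : ZMod N → Bool) (b : Bool) :
    {s : ℕ | s ≤ N ∧ HasRun x b s}.Nonempty :=
  ⟨0, Nat.zero_le N, ⟨0, fun k hk => absurd hk (Nat.not_lt_zero k)⟩⟩

lemma runSet_bddAbove (x : ZMod N → Bool) (b : Bool) :
    BddAbove {s : ℕ | s ≤ N ∧ HasRun x b s} :=
  ⟨N, fun _ hs => hs.1⟩

lemma maxRun_le (x : ZMod N → Bool) (b : Bool) : maxRun x b ≤ N :=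
  csSup_le (runSet_nonempty x b) (fun _ hs => hs.1)

lemma le_maxRun {x : ZMod N → Bool} {b : Bool} {s : ℕ} (hsN : s ≤ N)
    (h : HasRun x b s) : s ≤ maxRun x b :=
  le_csSup (runSet_bddAbove x b) ⟨hsN, h⟩

lemma hasRun_maxRun (x : ZMod N → Bool) (b : Bool) : HasRun x b (maxRun x b) :=
  (Nat.sSup_mem (runSet_nonempty x b) (runSet_bddAbove x b)).2

/-- If some cell differs from `b`, the max `b`-run is shorter than `N`. -/
lemma maxRun_lt (hN : 0 < N) {x : ZMod N → Bool} {b : Bool} {j : ZMod N}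
    (hj : x j ≠ b) : maxRun x b < N := by
  haveI : NeZero N := ⟨hN.ne'⟩
  rcases lt_or_eq_of_le (maxRun_le x b) with h | h
  · exact h
  · exfalso
    obtain ⟨i, hi⟩ := hasRun_maxRun x b
    rw [h] at hi
    have hk : (j - i).val < N := ZMod.val_lt (j - i)
    have := hi (j - i).val hk
    rw [show (((j - i).val : ℕ) : ZMod N) = j - i by
      rw [ZMod.natCast_val, ZMod.cast_id]] at this
    simp only [add_sub_cancel] at this
    exact hj this

lemma leftStep_eq (x : ZMod N → Bool) (i : ZMod N) :
    leftStep x i = !(x i && x (i - 1)) := by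
  unfold leftStep
  cases h1 : x i <;> cases h2 : x (i - 1) <;> simp [h1, h2]

lemma rightStep_eq (x : ZMod N → Bool) (i : ZMod N) :
    rightStep x i = !(x i || x (i + 1)) := by
  unfold rightStep
  cases h1 : x i <;> cases h2 : x (i + 1) <;> simp [h1, h2]

lemma hasRun_left_false {x : ZMod N → Bool} {s : ℕ} (h : HasRun x true (s + 1)) :
    HasRun (leftStep x) false s := by
  obtain ⟨i, hi⟩ := h
  refine ⟨i + 1, fun k hk => ?_⟩
  rw [leftStep_eq]
  have h1 : x (i + 1 + (k : ZMod N)) = true := by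
    have := hi (k + 1) (by omega)
    rwa [show ((k + 1 : ℕ) : ZMod N) = (k : ZMod N) + 1 by push_cast; ring,
      show i + ((k : ZMod N) + 1) = i + 1 + (k : ZMod N) by ring] at this
  have h2 : x (i + 1 + (k : ZMod N) - 1) = true := by
    have := hi k (by omega)
    rwa [show i + (k : ZMod N) = i + 1 + (k : ZMod N) - 1 by ring] at this
  rw [h1, h2]; rfl

lemma hasRun_left_true {x : ZMod N → Bool} {s : ℕ} (h : HasRun x false s) :
    HasRun (leftStep x) true s := by
  obtain ⟨i, hi⟩ := h
  refine ⟨i, fun k hk => ?_⟩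
  rw [leftStep_eq, hi k hk]; rfl

lemma hasRun_of_left_false {x : ZMod N → Bool} {s : ℕ} (hs : 1 ≤ s)
    (h : HasRun (leftStep x) false s) : HasRun x true (s + 1) := by
  obtain ⟨j, hj⟩ := h
  have key : ∀ m : ℕ, m < s → x (j + (m : ZMod N)) = true ∧ x (j + (m : ZMod N) - 1) = true := by
    intro m hm
    have hthis := hj m hm
    rw [leftStep_eq] at hthis
    simp only [Bool.not_eq_false', Bool.and_eq_true] at hthis
    exact hthis
  refine ⟨j - 1, ?_⟩
  intro k hk
  cases k with
  | zero =>
    have hz := (key 0 (by omega)).2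
    simpa using hz
  | succ m =>
    have hm := (key m (by omega)).1
    rwa [show j - 1 + ((m + 1 : ℕ) : ZMod N) = j + (m : ZMod N) by push_cast; ring]

lemma hasRun_right_true {x : ZMod N → Bool} {s : ℕ} (h : HasRun x false (s + 1)) :
    HasRun (rightStep x) true s := by
  obtain ⟨i, hi⟩ := h
  refine ⟨i, fun k hk => ?_⟩
  rw [rightStep_eq]
  have h1 : x (i + (k : ZMod N)) = false := hi k (by omega)
  have h2 : x (i + (k : ZMod N) + 1) = false := by
    have := hi (k + 1) (by omega)
    rwa [show ((k + 1 : ℕ) : ZMod N) = (k : ZMod N) + 1 by push_cast; ring,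
      show i + ((k : ZMod N) + 1) = i + (k : ZMod N) + 1 by ring] at this
  rw [h1, h2]; rfl

lemma hasRun_right_false {x : ZMod N → Bool} {s : ℕ} (h : HasRun x true s) :
    HasRun (rightStep x) false s := by
  obtain ⟨i, hi⟩ := h
  refine ⟨i, fun k hk => ?_⟩
  rw [rightStep_eq, hi k hk]; rfl

lemma hasRun_of_right_true {x : ZMod N → Bool} {s : ℕ} (hs : 1 ≤ s)
    (h : HasRun (rightStep x) true s) : HasRun x false (s + 1) := by
  obtain ⟨j, hj⟩ := h
  have key : ∀ m : ℕ, m < s → x (j + (m : ZMod N)) = false ∧ x (j + (m : ZMod N) + 1) = false := by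
    intro m hm
    have hthis := hj m hm
    rw [rightStep_eq] at hthis
    simp only [Bool.not_eq_true', Bool.or_eq_false_iff] at hthis
    exact hthis
  refine ⟨j, ?_⟩
  intro k hk
  rcases Nat.lt_or_ge k s with hks | hks
  · exact (key k hks).1
  · have hk2 : k = s := by omega
    have hlast := (key (k - 1) (by omega)).2
    rwa [show j + ((k - 1 : ℕ) : ZMod N) + 1 = j + (k : ZMod N) by
      have hcast : ((k - 1 : ℕ) : ZMod N) + 1 = (k : ZMod N) := by
        conv_rhs => rw [show k = (k - 1) + 1 by omega]
        push_cast; ring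
      rw [← hcast]; ring] at hlast

/-- Core computation: one step of the long-cluster rule decreases `lmin` by one. -/
lemma lmin_step (hN : 0 < N) (x : ZMod N → Bool) (h : 1 ≤ lmin x) :
    lmin (longClusterStep x) = lmin x - 1 := by
  simp only [lmin, l0, l1, longClusterStep] at *
  have h0 : 1 ≤ maxRun x false := le_trans h (min_le_left _ _)
  have h1 : 1 ≤ maxRun x true := le_trans h (min_le_right _ _)
  obtain ⟨i0, hi0⟩ := hasRun_maxRun x false
  obtain ⟨i1, hi1⟩ := hasRun_maxRun x true
  have hw0 : x (i0 + ((0 : ℕ) : ZMod N)) = false := hi0 0 h0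
  have hw1 : x (i1 + ((0 : ℕ) : ZMod N)) = true := hi1 0 h1
  have hl0lt : maxRun x false < N := maxRun_lt hN (by rw [hw1]; simp)
  have hl1lt : maxRun x true < N := maxRun_lt hN (by rw [hw0]; simp)
  split_ifs with hcmp
  · -- left step; min = maxRun x true
    set x' := leftStep x with hx'
    have hge : maxRun x true - 1 ≤ maxRun x' false := by
      apply le_maxRun (by omega)
      have hr : HasRun x true ((maxRun x true - 1) + 1) := by
        rw [show (maxRun x true - 1) + 1 = maxRun x true by omega]
        exact ⟨i1, hi1⟩
      exact hasRun_left_false hr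
    have hle : maxRun x' false ≤ maxRun x true - 1 := by
      by_contra hcon
      push_neg at hcon
      have hrun : HasRun x' false (maxRun x true) :=
        hasRun_mono (hasRun_maxRun x' false) (by omega)
      have hbig := hasRun_of_left_false h1 hrun
      have : maxRun x true + 1 ≤ maxRun x true := le_maxRun (by omega) hbig
      omega
    have hl1' : maxRun x false ≤ maxRun x' true := by
      apply le_maxRun (maxRun_le x false)
      exact hasRun_left_true ⟨i0, hi0⟩
    simp only [hcmp, if_true]
    omega
  · -- right step; min = maxRun x false
    push_neg at hcmp
    set x' := rightStep x with hx'
    have hge : maxRun x false - 1 ≤ maxRun x' true := by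
      apply le_maxRun (by omega)
      have hr : HasRun x false ((maxRun x false - 1) + 1) := by
        rw [show (maxRun x false - 1) + 1 = maxRun x false by omega]
        exact ⟨i0, hi0⟩
      exact hasRun_right_true hr
    have hle : maxRun x' true ≤ maxRun x false - 1 := by
      by_contra hcon
      push_neg at hcon
      have hrun : HasRun x' true (maxRun x false) :=
        hasRun_mono (hasRun_maxRun x' true) (by omega)
      have hbig := hasRun_of_right_true h0 hrun
      have : maxRun x false + 1 ≤ maxRun x false := le_maxRun (by omega) hbig
      omega
    have hl0' : maxRun x true ≤ maxRun x' false := by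
      apply le_maxRun (maxRun_le x true)
      exact hasRun_right_false ⟨i1, hi1⟩
    simp only [show ¬ maxRun x true ≤ maxRun x false by omega, if_false]
    omega

lemma lmin_iter (hN : 0 < N) : ∀ m : ℕ, ∀ x : ZMod N → Bool, lmin x = m →
    lmin (longClusterStep^[m] x) = 0 := by
  intro m
  induction m with
  | zero => intro x hx; simpa using hx
  | succ n ih =>
    intro x hx
    have hstep : lmin (longClusterStep x) = n := by
      rw [lmin_step hN x (by omega), hx]; omega
    rw [Function.iterate_succ_apply]
    exact ih _ hstep

/-- under the long cluster rule `S₀`, one step decreases `l` by exactly one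
whenever `l(x) ≥ 1`; consequently after exactly `l(x)` steps the system reaches `l = 0`. -/
theorem longCluster_decreases (hN : 0 < N) (x : ZMod N → Bool) (h : 1 ≤ lmin x) :
    lmin (longClusterStep x) = lmin x - 1 ∧
    lmin (longClusterStep^[lmin x] x) = 0 := by
  exact ⟨lmin_step hN x h, lmin_iter hN (lmin x) x rfl⟩


end ContourChain
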